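/- (Even reflection of a C² function with vanishing normal derivative.) Let H = {x ∈ ℝⁿ : xₙ ≥ 0} be the closed half-space. Let f : H → ℝ be such that f and all its partial derivatives up to order two exist and are continuous on H (one-sided at the boundary), and assume ∂f/∂xₙ(x) = 0 at every boundary point x with xₙ = 0. Define the even reflection f̃ : ℝⁿ → ℝ by f̃(x) = f(x) for xₙ ≥ 0 and f̃(x₁,…,xₙ) = f(x₁,…,x_{n−1},−xₙ) for xₙ < 0. Then f̃ is twice continuously differentiable on all of ℝⁿ. Moreover, if in addition the second-order partial derivatives of f are α-Hölder continuous on H for some 0 < α < 1, then the second-order partial derivatives of f̃ are locally α-Hölder continuous on ℝⁿ. -/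

import Mathlib

open Metric Set

noncomputable section

/-- Negation of the `i`-th coordinate of a point of `ℝⁿ`. -/
def negC {n : ℕ} (i : Fin n) (x : EuclideanSpace ℝ (Fin n)) : EuclideanSpace ℝ (Fin n) :=
  WithLp.toLp 2 (fun j => if j = i then -(x j) else x j)

/-- The closed half-space `H = {x ∈ ℝⁿ : 0 ≤ xₙ}`, `iN` being the index of `xₙ`. -/
def halfSp {n : ℕ} (iN : Fin n) : Set (EuclideanSpace ℝ (Fin n)) := {x | 0 ≤ x iN}

/-- The even reflection of `f` across the hyperplane `{xₙ = 0}`. -/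
def evenRefl {n : ℕ} (iN : Fin n) (f : EuclideanSpace ℝ (Fin n) → ℝ)
    (x : EuclideanSpace ℝ (Fin n)) : ℝ :=
  if 0 ≤ x iN then f x else f (negC iN x)

/-- The second-order partial derivative `∂²g/∂xᵢ∂xⱼ`, with derivatives taken within `s`. -/
def secondPartialW {n : ℕ} (g : EuclideanSpace ℝ (Fin n) → ℝ)
    (s : Set (EuclideanSpace ℝ (Fin n))) (i j : Fin n) (x : EuclideanSpace ℝ (Fin n)) : ℝ :=
  fderivWithin ℝ (fun z => fderivWithin ℝ g s z (EuclideanSpace.single i 1)) s x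
    (EuclideanSpace.single j 1)

/-- The second-order partial derivative `∂²g/∂xᵢ∂xⱼ` (full-space derivatives). -/
def secondPartial {n : ℕ} (g : EuclideanSpace ℝ (Fin n) → ℝ) (i j : Fin n)
    (x : EuclideanSpace ℝ (Fin n)) : ℝ :=
  fderiv ℝ (fun z => fderiv ℝ g z (EuclideanSpace.single i 1)) x (EuclideanSpace.single j 1)

namespace ERAux
variable {n : ℕ}
local notation "E" => EuclideanSpace ℝ (Fin n)

theorem abs_coord_le_norm (x : E) (i : Fin n) : |x i| ≤ ‖x‖ := by
  rw [EuclideanSpace.norm_eq, ← Real.sqrt_sq_eq_abs]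
  apply Real.sqrt_le_sqrt
  have := Finset.single_le_sum (f := fun j : Fin n => ‖x j‖ ^ 2)
    (fun j _ => sq_nonneg _) (Finset.mem_univ i)
  simpa [Real.norm_eq_abs, sq_abs] using this

theorem norm_le_of_abs_le {x y : E} (h : ∀ i, |x i| ≤ |y i|) : ‖x‖ ≤ ‖y‖ := by
  rw [EuclideanSpace.norm_eq, EuclideanSpace.norm_eq]
  apply Real.sqrt_le_sqrt
  apply Finset.sum_le_sum
  intro i _
  rw [Real.norm_eq_abs, Real.norm_eq_abs]
  exact pow_le_pow_left₀ (abs_nonneg _) (h i) 2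

def R (iN : Fin n) : E →L[ℝ] E :=
  ContinuousLinearMap.id ℝ _ -
    (EuclideanSpace.proj iN).smulRight ((2:ℝ) • EuclideanSpace.single iN (1:ℝ))

theorem R_apply (iN : Fin n) (x : E) (j : Fin n) :
    R iN x j = if j = iN then -(x j) else x j := by
  simp only [R, ContinuousLinearMap.coe_sub', Pi.sub_apply, ContinuousLinearMap.coe_id', id_eq,
    ContinuousLinearMap.smulRight_apply]
  rw [PiLp.sub_apply, PiLp.smul_apply, PiLp.smul_apply, EuclideanSpace.single_apply]
  have : (EuclideanSpace.proj iN) x = x iN := rfl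
  rw [this]
  split_ifs with h
  · subst h; simp [smul_eq_mul]; ring
  · have : iN ≠ j := fun hh => h hh.symm
    simp [this, smul_eq_mul]

theorem negC_eq_R (iN : Fin n) (x : E) : negC iN x = R iN x := by
  ext j; rw [R_apply]; rfl

theorem R_eq (iN : Fin n) (x : E) :
    R iN x = x - (2 * x iN) • EuclideanSpace.single iN 1 := by
  ext j
  rw [R_apply, PiLp.sub_apply, PiLp.smul_apply, EuclideanSpace.single_apply, smul_eq_mul]
  split_ifs with h
  · subst h; simp; ring
  · have : iN ≠ j := fun hh => h hh.symm
    simp [this]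

theorem R_invol (iN : Fin n) (x : E) : R iN (R iN x) = x := by
  ext j; rw [R_apply, R_apply]; split_ifs with h <;> simp

theorem R_abs (iN : Fin n) (x : E) (j : Fin n) : |R iN x j| = |x j| := by
  rw [R_apply]; split_ifs with h <;> simp

theorem R_norm (iN : Fin n) (x : E) : ‖R iN x‖ = ‖x‖ :=
  le_antisymm (norm_le_of_abs_le fun j => (R_abs iN x j).le)
    (norm_le_of_abs_le fun j => (R_abs iN x j).ge)

theorem R_boundary (iN : Fin n) {x : E} (hx : x iN = 0) : R iN x = x := by
  ext j; rw [R_apply]; split_ifs with h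
  · subst h; rw [hx]; simp
  · rfl

theorem R_single (iN j : Fin n) :
    R iN (EuclideanSpace.single j 1) =
      (if j = iN then (-1:ℝ) else 1) • EuclideanSpace.single j (1:ℝ) := by
  ext k
  rw [R_apply, PiLp.smul_apply, EuclideanSpace.single_apply, smul_eq_mul]
  split_ifs <;> simp_all

def eN (iN : Fin n) : E := EuclideanSpace.single iN 1

theorem proj_cont (iN : Fin n) : Continuous fun x : E => x iN :=
  (EuclideanSpace.proj iN).continuous

theorem mem_halfSp {iN : Fin n} {x : E} : x ∈ halfSp iN ↔ 0 ≤ x iN := Iff.rfl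

theorem isClosed_halfSp (iN : Fin n) : IsClosed (halfSp iN) :=
  isClosed_le continuous_const (proj_cont iN)

def lowSp (iN : Fin n) : Set E := {x | x iN ≤ 0}

theorem isClosed_lowSp (iN : Fin n) : IsClosed (lowSp iN) :=
  isClosed_le (proj_cont iN) continuous_const

theorem union_eq_univ (iN : Fin n) : halfSp iN ∪ lowSp iN = univ := by
  ext x; simp only [mem_union, mem_univ, iff_true, halfSp, lowSp, mem_setOf_eq]
  exact le_or_gt 0 (x iN) |>.imp id le_of_lt

theorem convex_halfSp (iN : Fin n) : Convex ℝ (halfSp iN) := by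
  intro x hx y hy a b ha hb _
  have hx' : (0:ℝ) ≤ x iN := hx
  have hy' : (0:ℝ) ≤ y iN := hy
  show (0:ℝ) ≤ (a • x + b • y) iN
  rw [PiLp.add_apply, PiLp.smul_apply, PiLp.smul_apply, smul_eq_mul, smul_eq_mul]
  have := mul_nonneg ha hx'
  have := mul_nonneg hb hy'
  linarith

theorem single_mem_int (iN : Fin n) : EuclideanSpace.single iN (1:ℝ) ∈ interior (halfSp iN) := by
  rw [mem_interior]
  refine ⟨Metric.ball (EuclideanSpace.single iN 1) 1, ?_, Metric.isOpen_ball,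
    Metric.mem_ball_self one_pos⟩
  intro y hy
  have h1 : |y iN - 1| ≤ ‖y - EuclideanSpace.single iN 1‖ := by
    have := abs_coord_le_norm (y - EuclideanSpace.single iN 1) iN
    rwa [PiLp.sub_apply, EuclideanSpace.single_apply, if_pos rfl] at this
  have h2 : ‖y - EuclideanSpace.single iN 1‖ < 1 := by
    rw [← dist_eq_norm]; exact Metric.mem_ball.mp hy
  have h3 := abs_lt.mp (lt_of_le_of_lt h1 h2)
  show (0:ℝ) ≤ y iN
  linarith [h3.1]

theorem uDiff (iN : Fin n) : UniqueDiffOn ℝ (halfSp iN) :=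
  uniqueDiffOn_convex (convex_halfSp iN) ⟨_, single_mem_int iN⟩

theorem halfSp_mem_nhds {iN : Fin n} {x : E} (hx : 0 < x iN) : halfSp iN ∈ nhds x :=
  mem_nhds_iff.mpr ⟨{z : E | 0 < z iN}, fun z hz => (le_of_lt hz : (0:ℝ) ≤ z iN),
    isOpen_lt continuous_const (proj_cont iN), hx⟩

theorem lowSp_mem_nhds {iN : Fin n} {x : E} (hx : x iN < 0) : lowSp iN ∈ nhds x :=
  mem_nhds_iff.mpr ⟨{z : E | z iN < 0}, fun z hz => (le_of_lt hz : z iN ≤ (0:ℝ)),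
    isOpen_lt (proj_cont iN) continuous_const, hx⟩

theorem mapsTo_R (iN : Fin n) : MapsTo (R iN) (lowSp iN) (halfSp iN) := by
  intro z hz
  have h : R iN z iN = -(z iN) := by rw [R_apply, if_pos rfl]
  have hz' : z iN ≤ 0 := hz
  show (0:ℝ) ≤ R iN z iN
  rw [h]; linarith

theorem R_mem_halfSp {iN : Fin n} {z : E} (hz : z iN ≤ 0) : R iN z ∈ halfSp iN :=
  mapsTo_R iN hz

section Main

variable (iN : Fin n) (f : EuclideanSpace ℝ (Fin n) → ℝ)

def Df : EuclideanSpace ℝ (Fin n) → EuclideanSpace ℝ (Fin n) →L[ℝ] ℝ :=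
  fderivWithin ℝ f (halfSp iN)

def D2 : EuclideanSpace ℝ (Fin n) →
    EuclideanSpace ℝ (Fin n) →L[ℝ] (EuclideanSpace ℝ (Fin n) →L[ℝ] ℝ) :=
  fderivWithin ℝ (Df iN f) (halfSp iN)

variable {iN f} (hf : ContDiffOn ℝ 2 f (halfSp iN))
include hf

theorem hDf_c1 : ContDiffOn ℝ 1 (Df iN f) (halfSp iN) :=
  hf.fderivWithin (uDiff iN) (by norm_num)

theorem hDf_diff : ∀ x ∈ halfSp iN, HasFDerivWithinAt (Df iN f) (D2 iN f x) (halfSp iN) x :=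
  fun x hx => (((hDf_c1 hf).differentiableOn one_ne_zero) x hx).hasFDerivWithinAt

theorem hD2_cont : ContinuousOn (D2 iN f) (halfSp iN) :=
  ((hDf_c1 hf).fderivWithin (uDiff iN) (m := 0) (by norm_num)).continuousOn

theorem hf_diffW : ∀ x ∈ halfSp iN, HasFDerivWithinAt f (Df iN f x) (halfSp iN) x :=
  fun x hx => ((hf.differentiableOn two_ne_zero) x hx).hasFDerivWithinAt

theorem hasAt_interior {x : EuclideanSpace ℝ (Fin n)} (hx : 0 < x iN) :
    HasFDerivAt f (Df iN f x) x :=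
  (hf_diffW hf x (le_of_lt hx)).hasFDerivAt (halfSp_mem_nhds hx)

theorem D2_symm {x : EuclideanSpace ℝ (Fin n)} (hx : x ∈ halfSp iN)
    (v w : EuclideanSpace ℝ (Fin n)) : D2 iN f x v w = D2 iN f x w v := by
  apply (convex_halfSp iN).second_derivative_within_at_symmetric ⟨_, single_mem_int iN⟩
    (f := f) (f' := Df iN f) (f'' := D2 iN f x) ?_ hx ?_
  · intro y hy
    exact (hf_diffW hf y (interior_subset hy)).hasFDerivAt (mem_interior_iff_mem_nhds.mp hy)
  · exact (hDf_diff hf x hx).mono interior_subset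

end Main

section Main2

variable {iN : Fin n} {f : EuclideanSpace ℝ (Fin n) → ℝ}
  (hf : ContDiffOn ℝ 2 f (halfSp iN))
  (hneu : ∀ x : EuclideanSpace ℝ (Fin n), x iN = 0 →
    fderivWithin ℝ f (halfSp iN) x (EuclideanSpace.single iN 1) = 0)
include hf hneu

theorem D2_tangent {x : EuclideanSpace ℝ (Fin n)} (hx0 : x iN = 0)
    {v : EuclideanSpace ℝ (Fin n)} (hv : v iN = 0) :
    D2 iN f x v (EuclideanSpace.single iN 1) = 0 := by
  have hxH : x ∈ halfSp iN := by show (0:ℝ) ≤ x iN; rw [hx0]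
  set A := ContinuousLinearMap.apply ℝ ℝ (EuclideanSpace.single iN (1:ℝ)) with hA
  -- step 1 : derivative of z ↦ Df z eN within halfSp
  have step1 : HasFDerivWithinAt (fun z => A (Df iN f z)) (A.comp (D2 iN f x)) (halfSp iN) x :=
    A.hasFDerivAt.comp_hasFDerivWithinAt x (hDf_diff hf x hxH)
  -- the line t ↦ x + t • v
  set c : ℝ → EuclideanSpace ℝ (Fin n) := fun t => x + t • v with hc
  have hline : ∀ t : ℝ, (c t) iN = 0 := by
    intro t
    rw [hc]
    show (x + t • v) iN = 0
    rw [PiLp.add_apply, PiLp.smul_apply, hx0, hv, smul_eq_mul]; ring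
  have hmaps : MapsTo c univ (halfSp iN) := fun t _ => by
    show (0:ℝ) ≤ c t iN; rw [hline t]
  have hcd : HasDerivAt c v 0 := by
    have h1 : HasDerivAt (fun t : ℝ => t • v) ((1:ℝ) • v) 0 := (hasDerivAt_id 0).smul_const v
    rw [one_smul] at h1
    exact h1.const_add x
  have hc0 : c 0 = x := by rw [hc]; simp
  have step2 : HasDerivWithinAt ((fun z => A (Df iN f z)) ∘ c) ((A.comp (D2 iN f x)) v)
      univ 0 := by
    refine HasFDerivWithinAt.comp_hasDerivWithinAt 0 ?_ hcd.hasDerivWithinAt hmaps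
    rw [hc0]; exact step1
  have hzero : ((fun z => A (Df iN f z)) ∘ c) = fun _ => (0:ℝ) := by
    funext t
    show A (Df iN f (c t)) = 0
    have := hneu (c t) (hline t)
    simpa [hA, Df] using this
  rw [hzero, hasDerivWithinAt_univ] at step2
  have : ((A.comp (D2 iN f x)) v) = 0 := step2.unique (hasDerivAt_const 0 0)
  simpa [hA] using this

theorem Df_refl {x : EuclideanSpace ℝ (Fin n)} (hx0 : x iN = 0)
    (v : EuclideanSpace ℝ (Fin n)) : Df iN f x (R iN v) = Df iN f x v := by
  rw [R_eq, map_sub, map_smul]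
  have : Df iN f x (EuclideanSpace.single iN 1) = 0 := hneu x hx0
  rw [this]; simp

theorem D2_refl {x : EuclideanSpace ℝ (Fin n)} (hx0 : x iN = 0)
    (v w : EuclideanSpace ℝ (Fin n)) :
    D2 iN f x (R iN v) (R iN w) = D2 iN f x v w := by
  have hxH : x ∈ halfSp iN := by show (0:ℝ) ≤ x iN; rw [hx0]
  set eN : EuclideanSpace ℝ (Fin n) := EuclideanSpace.single iN 1 with heN
  have htang : ∀ u : EuclideanSpace ℝ (Fin n), u iN = 0 → D2 iN f x u eN = 0 :=
    fun u hu => D2_tangent hf hneu hx0 hu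
  have h1 : ∀ u : EuclideanSpace ℝ (Fin n), D2 iN f x u eN = u iN * D2 iN f x eN eN := by
    intro u
    have hu : u = (u - u iN • eN) + u iN • eN := by abel
    have htan : (u - u iN • eN) iN = 0 := by
      rw [PiLp.sub_apply, PiLp.smul_apply, heN, EuclideanSpace.single_apply, if_pos rfl,
        smul_eq_mul]; ring
    calc D2 iN f x u eN = D2 iN f x ((u - u iN • eN) + u iN • eN) eN := by rw [← hu]
      _ = D2 iN f x (u - u iN • eN) eN + u iN * D2 iN f x eN eN := by
          rw [map_add, map_smul, ContinuousLinearMap.add_apply,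
            ContinuousLinearMap.smul_apply, smul_eq_mul]
      _ = u iN * D2 iN f x eN eN := by rw [htang _ htan]; ring
  have h2 : ∀ u : EuclideanSpace ℝ (Fin n), D2 iN f x eN u = u iN * D2 iN f x eN eN := by
    intro u
    rw [D2_symm hf hxH eN u]
    exact h1 u
  have expand : D2 iN f x (R iN v) (R iN w) =
      D2 iN f x v w - (2 * w iN) * D2 iN f x v eN - (2 * v iN) * (D2 iN f x eN w)
        + (2 * v iN) * ((2 * w iN) * D2 iN f x eN eN) := by
    simp only [R_eq iN v, R_eq iN w, map_sub, map_smul, ContinuousLinearMap.sub_apply,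
      ContinuousLinearMap.smul_apply, smul_eq_mul, ← heN]
    ring
  rw [expand, h1 v, h2 w]
  ring

end Main2


section Main3

variable (iN : Fin n) (f : EuclideanSpace ℝ (Fin n) → ℝ)

def evenRefl' (x : EuclideanSpace ℝ (Fin n)) : ℝ :=
  if 0 ≤ x iN then f x else f (negC iN x)

def Pre : (EuclideanSpace ℝ (Fin n) →L[ℝ] ℝ) →L[ℝ] (EuclideanSpace ℝ (Fin n) →L[ℝ] ℝ) :=
  (ContinuousLinearMap.compL ℝ (EuclideanSpace ℝ (Fin n)) (EuclideanSpace ℝ (Fin n)) ℝ).flip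
    (R iN)

theorem Pre_apply (A : EuclideanSpace ℝ (Fin n) →L[ℝ] ℝ) : Pre iN A = A.comp (R iN) := rfl

def Phi : (EuclideanSpace ℝ (Fin n) →L[ℝ] (EuclideanSpace ℝ (Fin n) →L[ℝ] ℝ)) →L[ℝ]
    (EuclideanSpace ℝ (Fin n) →L[ℝ] (EuclideanSpace ℝ (Fin n) →L[ℝ] ℝ)) :=
  ((ContinuousLinearMap.compL ℝ (EuclideanSpace ℝ (Fin n)) (EuclideanSpace ℝ (Fin n) →L[ℝ] ℝ)
      (EuclideanSpace ℝ (Fin n) →L[ℝ] ℝ)) (Pre iN)).comp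
    ((ContinuousLinearMap.compL ℝ (EuclideanSpace ℝ (Fin n)) (EuclideanSpace ℝ (Fin n))
      (EuclideanSpace ℝ (Fin n) →L[ℝ] ℝ)).flip (R iN))

theorem Phi_apply (A : EuclideanSpace ℝ (Fin n) →L[ℝ] (EuclideanSpace ℝ (Fin n) →L[ℝ] ℝ)) :
    Phi iN A = (Pre iN).comp (A.comp (R iN)) := rfl

theorem Phi_apply₂ (A : EuclideanSpace ℝ (Fin n) →L[ℝ] (EuclideanSpace ℝ (Fin n) →L[ℝ] ℝ))
    (v w : EuclideanSpace ℝ (Fin n)) : Phi iN A v w = A (R iN v) (R iN w) := rfl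

def F1 : EuclideanSpace ℝ (Fin n) → EuclideanSpace ℝ (Fin n) →L[ℝ] ℝ := fun x =>
  if 0 ≤ x iN then Df iN f x else Pre iN (Df iN f (R iN x))

def F2 : EuclideanSpace ℝ (Fin n) →
    EuclideanSpace ℝ (Fin n) →L[ℝ] (EuclideanSpace ℝ (Fin n) →L[ℝ] ℝ) := fun x =>
  if 0 ≤ x iN then D2 iN f x else Phi iN (D2 iN f (R iN x))

theorem evenRefl'_eqOn_H : EqOn (evenRefl' iN f) f (halfSp iN) := fun z hz => if_pos hz

theorem evenRefl'_eqOn_L : EqOn (evenRefl' iN f) (fun z => f (R iN z)) (lowSp iN) := by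
  intro z hz
  have hz' : z iN ≤ 0 := hz
  rcases lt_or_eq_of_le hz' with h | h
  · show (if 0 ≤ z iN then f z else f (negC iN z)) = f (R iN z)
    rw [if_neg (not_le.mpr h), negC_eq_R]
  · show (if 0 ≤ z iN then f z else f (negC iN z)) = f (R iN z)
    rw [if_pos h.ge, R_boundary iN h]

variable {iN f}
variable (hf : ContDiffOn ℝ 2 f (halfSp iN))
  (hneu : ∀ x : EuclideanSpace ℝ (Fin n), x iN = 0 →
    fderivWithin ℝ f (halfSp iN) x (EuclideanSpace.single iN 1) = 0)
include hf hneu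

theorem Df_refl_comp {x : EuclideanSpace ℝ (Fin n)} (hx0 : x iN = 0) :
    Pre iN (Df iN f x) = Df iN f x :=
  ContinuousLinearMap.ext fun v => Df_refl hf hneu hx0 v

theorem D2_refl_comp {x : EuclideanSpace ℝ (Fin n)} (hx0 : x iN = 0) :
    Phi iN (D2 iN f x) = D2 iN f x :=
  ContinuousLinearMap.ext fun v => ContinuousLinearMap.ext fun w => D2_refl hf hneu hx0 v w

theorem hasF1 (x : EuclideanSpace ℝ (Fin n)) :
    HasFDerivAt (evenRefl' iN f) (F1 iN f x) x := by
  rcases lt_trichotomy (x iN) 0 with hx | hx | hx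
  · -- lower open half-space
    have hR : 0 < (R iN x) iN := by rw [R_apply, if_pos rfl]; linarith
    have h1 : HasFDerivAt f (Df iN f (R iN x)) (R iN x) := hasAt_interior hf hR
    have h2 : HasFDerivAt (fun z => f (R iN z)) ((Df iN f (R iN x)).comp (R iN)) x :=
      h1.comp x (R iN).hasFDerivAt
    have hev : evenRefl' iN f =ᶠ[nhds x] fun z => f (R iN z) :=
      Filter.eventuallyEq_of_mem (lowSp_mem_nhds hx) (evenRefl'_eqOn_L iN f)
    have h3 := h2.congr_of_eventuallyEq hev
    have hF : F1 iN f x = (Df iN f (R iN x)).comp (R iN) := by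
      rw [F1, if_neg (not_le.mpr hx), Pre_apply]
    rw [hF]; exact h3
  · -- boundary
    have hx0 : x iN = 0 := hx
    have hxH : x ∈ halfSp iN := by show (0:ℝ) ≤ x iN; rw [hx0]
    have hF : F1 iN f x = Df iN f x := if_pos hx.ge
    rw [hF]
    have hH : HasFDerivWithinAt (evenRefl' iN f) (Df iN f x) (halfSp iN) x :=
      (hf_diffW hf x hxH).congr (evenRefl'_eqOn_H iN f) (evenRefl'_eqOn_H iN f hxH)
    have hL : HasFDerivWithinAt (evenRefl' iN f) (Df iN f x) (lowSp iN) x := by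
      have hxL : x ∈ lowSp iN := hx0.le
      have hRx : R iN x = x := R_boundary iN hx0
      have hin : HasFDerivWithinAt f (Df iN f x) (halfSp iN) (R iN x) := by
        rw [hRx]; exact hf_diffW hf x hxH
      have h2 : HasFDerivWithinAt (fun z => f (R iN z)) ((Df iN f x).comp (R iN))
          (lowSp iN) x :=
        hin.comp x ((R iN).hasFDerivAt.hasFDerivWithinAt) (mapsTo_R iN)
      rw [← Pre_apply, Df_refl_comp hf hneu hx0] at h2
      exact h2.congr (evenRefl'_eqOn_L iN f) (evenRefl'_eqOn_L iN f hxL)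
    have := hH.union hL
    rw [union_eq_univ iN, hasFDerivWithinAt_univ] at this
    exact this
  · -- upper open half-space
    have hev : evenRefl' iN f =ᶠ[nhds x] f :=
      Filter.eventuallyEq_of_mem (halfSp_mem_nhds hx) (evenRefl'_eqOn_H iN f)
    have hF : F1 iN f x = Df iN f x := if_pos hx.le
    rw [hF]
    exact ((hasAt_interior hf hx).congr_of_eventuallyEq hev)

end Main3


section Main4

variable {iN : Fin n} {f : EuclideanSpace ℝ (Fin n) → ℝ}
variable (hf : ContDiffOn ℝ 2 f (halfSp iN))
  (hneu : ∀ x : EuclideanSpace ℝ (Fin n), x iN = 0 →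
    fderivWithin ℝ f (halfSp iN) x (EuclideanSpace.single iN 1) = 0)
include hf hneu

theorem F1_eqOn_H : EqOn (F1 iN f) (Df iN f) (halfSp iN) := fun z hz => if_pos hz

theorem F1_eqOn_L : EqOn (F1 iN f) (fun z => Pre iN (Df iN f (R iN z))) (lowSp iN) := by
  intro z hz
  have hz' : z iN ≤ 0 := hz
  rcases lt_or_eq_of_le hz' with h | h
  · exact if_neg (not_le.mpr h)
  · show (if 0 ≤ z iN then Df iN f z else Pre iN (Df iN f (R iN z)))
      = Pre iN (Df iN f (R iN z))
    rw [if_pos h.ge, R_boundary iN h, Df_refl_comp hf hneu h]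

theorem F2_eqOn_H : EqOn (F2 iN f) (D2 iN f) (halfSp iN) := fun z hz => if_pos hz

theorem F2_eqOn_L : EqOn (F2 iN f) (fun z => Phi iN (D2 iN f (R iN z))) (lowSp iN) := by
  intro z hz
  have hz' : z iN ≤ 0 := hz
  rcases lt_or_eq_of_le hz' with h | h
  · exact if_neg (not_le.mpr h)
  · show (if 0 ≤ z iN then D2 iN f z else Phi iN (D2 iN f (R iN z)))
      = Phi iN (D2 iN f (R iN z))
    rw [if_pos h.ge, R_boundary iN h, D2_refl_comp hf hneu h]

theorem hasF2 (x : EuclideanSpace ℝ (Fin n)) : HasFDerivAt (F1 iN f) (F2 iN f x) x := by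
  rcases lt_trichotomy (x iN) 0 with hx | hx | hx
  · -- lower open half-space
    have hR : 0 < (R iN x) iN := by rw [R_apply, if_pos rfl]; linarith
    have h1 : HasFDerivAt (Df iN f) (D2 iN f (R iN x)) (R iN x) :=
      (hDf_diff hf (R iN x) hR.le).hasFDerivAt (halfSp_mem_nhds hR)
    have h2 : HasFDerivAt (fun z => Pre iN (Df iN f (R iN z)))
        ((Pre iN).comp ((D2 iN f (R iN x)).comp (R iN))) x :=
      (Pre iN).hasFDerivAt.comp x (h1.comp x (R iN).hasFDerivAt)
    have hev : F1 iN f =ᶠ[nhds x] fun z => Pre iN (Df iN f (R iN z)) :=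
      Filter.eventuallyEq_of_mem (lowSp_mem_nhds hx) (F1_eqOn_L hf hneu)
    have h3 := h2.congr_of_eventuallyEq hev
    have hF : F2 iN f x = (Pre iN).comp ((D2 iN f (R iN x)).comp (R iN)) := by
      rw [F2, if_neg (not_le.mpr hx), Phi_apply]
    rw [hF]; exact h3
  · -- boundary
    have hx0 : x iN = 0 := hx
    have hxH : x ∈ halfSp iN := hx.ge
    have hF : F2 iN f x = D2 iN f x := if_pos hx.ge
    rw [hF]
    have hH : HasFDerivWithinAt (F1 iN f) (D2 iN f x) (halfSp iN) x :=
      (hDf_diff hf x hxH).congr (F1_eqOn_H hf hneu) (F1_eqOn_H hf hneu hxH)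
    have hL : HasFDerivWithinAt (F1 iN f) (D2 iN f x) (lowSp iN) x := by
      have hxL : x ∈ lowSp iN := hx0.le
      have hRx : R iN x = x := R_boundary iN hx0
      have hin : HasFDerivWithinAt (Df iN f) (D2 iN f x) (halfSp iN) (R iN x) := by
        rw [hRx]; exact hDf_diff hf x hxH
      have h2 : HasFDerivWithinAt (fun z => Pre iN (Df iN f (R iN z)))
          ((Pre iN).comp ((D2 iN f x).comp (R iN))) (lowSp iN) x :=
        (Pre iN).hasFDerivAt.comp_hasFDerivWithinAt x
          (hin.comp x ((R iN).hasFDerivAt.hasFDerivWithinAt) (mapsTo_R iN))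
      rw [← Phi_apply, D2_refl_comp hf hneu hx0] at h2
      exact h2.congr (F1_eqOn_L hf hneu) (F1_eqOn_L hf hneu hxL)
    have := hH.union hL
    rw [union_eq_univ iN, hasFDerivWithinAt_univ] at this
    exact this
  · -- upper open half-space
    have hev : F1 iN f =ᶠ[nhds x] Df iN f :=
      Filter.eventuallyEq_of_mem (halfSp_mem_nhds hx) (F1_eqOn_H hf hneu)
    have hF : F2 iN f x = D2 iN f x := if_pos hx.le
    rw [hF]
    exact (((hDf_diff hf x hx.le).hasFDerivAt (halfSp_mem_nhds hx)).congr_of_eventuallyEq hev)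

theorem contF2 : Continuous (F2 iN f) := by
  rw [continuous_iff_continuousAt]
  intro x
  have hU : ContinuousWithinAt (F2 iN f) (halfSp iN) x := by
    rcases le_or_gt 0 (x iN) with hx | hx
    · exact ((hD2_cont hf).continuousWithinAt hx).congr (F2_eqOn_H hf hneu)
        (F2_eqOn_H hf hneu hx)
    · apply continuousWithinAt_of_notMem_closure
      rw [(isClosed_halfSp iN).closure_eq]
      exact fun h => absurd (h : (0:ℝ) ≤ x iN) (not_le.mpr hx)
  have hL : ContinuousWithinAt (F2 iN f) (lowSp iN) x := by
    rcases le_or_gt (x iN) 0 with hx | hx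
    · have hcont : ContinuousOn (fun z => Phi iN (D2 iN f (R iN z))) (lowSp iN) := by
        apply (Phi iN).continuous.comp_continuousOn
        exact (hD2_cont hf).comp (R iN).continuous.continuousOn (mapsTo_R iN)
      exact (hcont.continuousWithinAt hx).congr (F2_eqOn_L hf hneu) (F2_eqOn_L hf hneu hx)
    · apply continuousWithinAt_of_notMem_closure
      rw [(isClosed_lowSp iN).closure_eq]
      exact fun h => absurd (h : x iN ≤ (0:ℝ)) (not_le.mpr hx)
  have := hU.union hL
  rwa [union_eq_univ iN, continuousWithinAt_univ] at this

theorem fderiv_evenRefl' : fderiv ℝ (evenRefl' iN f) = F1 iN f :=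
  funext fun x => (hasF1 hf hneu x).fderiv

theorem fderiv_F1 : fderiv ℝ (F1 iN f) = F2 iN f :=
  funext fun x => (hasF2 hf hneu x).fderiv

theorem contDiff_evenRefl' : ContDiff ℝ 2 (evenRefl' iN f) := by
  rw [show (2 : WithTop ℕ∞) = 1 + 1 by norm_num, contDiff_succ_iff_fderiv]
  refine ⟨fun x => (hasF1 hf hneu x).differentiableAt, by simp, ?_⟩
  rw [fderiv_evenRefl' hf hneu, contDiff_one_iff_fderiv]
  exact ⟨fun x => (hasF2 hf hneu x).differentiableAt,
    by rw [fderiv_F1 hf hneu]; exact contF2 hf hneu⟩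

end Main4


section Main5

variable {iN : Fin n} {f : EuclideanSpace ℝ (Fin n) → ℝ}
variable (hf : ContDiffOn ℝ 2 f (halfSp iN))
  (hneu : ∀ x : EuclideanSpace ℝ (Fin n), x iN = 0 →
    fderivWithin ℝ f (halfSp iN) x (EuclideanSpace.single iN 1) = 0)
include hf

theorem secondPartialW_eq (i j : Fin n) {x : EuclideanSpace ℝ (Fin n)} (hx : x ∈ halfSp iN) :
    secondPartialW f (halfSp iN) i j x
      = D2 iN f x (EuclideanSpace.single j 1) (EuclideanSpace.single i 1) := by
  have h : HasFDerivWithinAt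
      (fun z => fderivWithin ℝ f (halfSp iN) z (EuclideanSpace.single i 1))
      ((ContinuousLinearMap.apply ℝ ℝ (EuclideanSpace.single i (1:ℝ))).comp (D2 iN f x))
      (halfSp iN) x :=
    (ContinuousLinearMap.apply ℝ ℝ
      (EuclideanSpace.single i (1:ℝ))).hasFDerivAt.comp_hasFDerivWithinAt x (hDf_diff hf x hx)
  unfold secondPartialW
  rw [h.fderivWithin (uDiff iN x hx)]
  rfl

include hneu

theorem secondPartial_eq (i j : Fin n) (y : EuclideanSpace ℝ (Fin n)) :
    secondPartial (evenRefl' iN f) i j y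
      = F2 iN f y (EuclideanSpace.single j 1) (EuclideanSpace.single i 1) := by
  unfold secondPartial
  have h1 : (fun z => fderiv ℝ (evenRefl' iN f) z (EuclideanSpace.single i 1))
      = fun z => (ContinuousLinearMap.apply ℝ ℝ (EuclideanSpace.single i (1:ℝ))) (F1 iN f z) := by
    funext z; rw [fderiv_evenRefl' hf hneu]; rfl
  rw [h1]
  have h2 : HasFDerivAt
      (fun z => (ContinuousLinearMap.apply ℝ ℝ (EuclideanSpace.single i (1:ℝ))) (F1 iN f z))
      ((ContinuousLinearMap.apply ℝ ℝ (EuclideanSpace.single i (1:ℝ))).comp (F2 iN f y)) y :=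
    (ContinuousLinearMap.apply ℝ ℝ
      (EuclideanSpace.single i (1:ℝ))).hasFDerivAt.comp y (hasF2 hf hneu y)
  rw [h2.fderiv]
  rfl

theorem Q_pos (i j : Fin n) {y : EuclideanSpace ℝ (Fin n)} (hy : 0 ≤ y iN) :
    secondPartial (evenRefl' iN f) i j y = secondPartialW f (halfSp iN) i j y := by
  rw [secondPartial_eq hf hneu, secondPartialW_eq hf i j hy]
  simp only [F2, if_pos hy]

theorem Q_neg (i j : Fin n) {y : EuclideanSpace ℝ (Fin n)} (hy : y iN < 0) :
    secondPartial (evenRefl' iN f) i j y =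
      ((if i = iN then (-1:ℝ) else 1) * (if j = iN then (-1:ℝ) else 1)) *
        secondPartialW f (halfSp iN) i j (R iN y) := by
  rw [secondPartial_eq hf hneu, secondPartialW_eq hf i j (R_mem_halfSp hy.le)]
  simp only [F2, if_neg (not_le.mpr hy)]
  rw [Phi_apply₂, R_single iN j, R_single iN i]
  simp only [map_smul, ContinuousLinearMap.smul_apply, smul_eq_mul]
  ring

theorem P_bd_zero (i j : Fin n) (h : (i = iN ∧ j ≠ iN) ∨ (i ≠ iN ∧ j = iN))
    {w : EuclideanSpace ℝ (Fin n)} (hw : w iN = 0) :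
    secondPartialW f (halfSp iN) i j w = 0 := by
  have hwH : w ∈ halfSp iN := hw.ge
  rw [secondPartialW_eq hf i j hwH]
  have hsingle : ∀ a b : Fin n, a ≠ b → EuclideanSpace.single a (1:ℝ) b = 0 := fun a b hab => by
    rw [EuclideanSpace.single_apply, if_neg (fun h => hab h.symm)]
  rcases h with ⟨hi, hj⟩ | ⟨hi, hj⟩
  · rw [hi]
    exact D2_tangent hf hneu hw (hsingle j iN hj)
  · rw [hj]
    rw [D2_symm hf hwH]
    exact D2_tangent hf hneu hw (hsingle i iN hi)

theorem holder_glob (α : ℝ) (hα : 0 < α) (C : ℝ)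
    (hC : ∀ i j : Fin n, ∀ x ∈ halfSp iN, ∀ y ∈ halfSp iN,
      |secondPartialW f (halfSp iN) i j x - secondPartialW f (halfSp iN) i j y|
        ≤ C * ‖x - y‖ ^ α)
    (i j : Fin n) (y z : EuclideanSpace ℝ (Fin n)) :
    |secondPartial (evenRefl' iN f) i j y - secondPartial (evenRefl' iN f) i j z|
      ≤ 2 * C * ‖y - z‖ ^ α := by
  set P := secondPartialW f (halfSp iN) i j with hP
  -- C is nonnegative
  have hC0 : 0 ≤ C := by
    have h0 : (0 : EuclideanSpace ℝ (Fin n)) ∈ halfSp iN := by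
      show (0:ℝ) ≤ (0 : EuclideanSpace ℝ (Fin n)) iN; simp
    have h1 : (EuclideanSpace.single iN (1:ℝ)) ∈ halfSp iN := by
      show (0:ℝ) ≤ (EuclideanSpace.single iN (1:ℝ)) iN
      rw [EuclideanSpace.single_apply, if_pos rfl]; norm_num
    have := hC i j 0 h0 (EuclideanSpace.single iN 1) h1
    rw [zero_sub, norm_neg, EuclideanSpace.norm_single, norm_one, Real.one_rpow,
      mul_one] at this
    exact le_trans (abs_nonneg _) this
  have hmono : ∀ a b : ℝ, 0 ≤ a → a ≤ b → C * a ^ α ≤ C * b ^ α := fun a b ha hab =>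
    mul_le_mul_of_nonneg_left (Real.rpow_le_rpow ha hab hα.le) hC0
  have coord : ∀ u v : EuclideanSpace ℝ (Fin n), |u iN - v iN| ≤ ‖u - v‖ := by
    intro u v
    have := abs_coord_le_norm (u - v) iN
    rwa [PiLp.sub_apply] at this
  have hrnn : ∀ u v : EuclideanSpace ℝ (Fin n), (0:ℝ) ≤ ‖u - v‖ ^ α := fun u v =>
    Real.rpow_nonneg (norm_nonneg _) α
  -- the key mixed-sign estimate
  have key : ∀ u v : EuclideanSpace ℝ (Fin n), u iN < 0 → 0 ≤ v iN →
      |secondPartial (evenRefl' iN f) i j u - secondPartial (evenRefl' iN f) i j v|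
        ≤ 2 * C * ‖u - v‖ ^ α := by
    intro u v hu hv
    rw [Q_neg hf hneu i j hu, Q_pos hf hneu i j hv, ← hP]
    have habs_uv : |u iN - v iN| = v iN - u iN := by
      rw [abs_of_nonpos (by linarith)]; ring
    by_cases hsame : (i = iN ∧ j = iN) ∨ (i ≠ iN ∧ j ≠ iN)
    · have hs : ((if i = iN then (-1:ℝ) else 1) * (if j = iN then (-1:ℝ) else 1)) = 1 := by
        rcases hsame with ⟨hi, hj⟩ | ⟨hi, hj⟩ <;> simp [hi, hj]
      rw [hs, one_mul]
      have hle : ‖R iN u - v‖ ≤ ‖u - v‖ := by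
        apply norm_le_of_abs_le
        intro k
        rw [PiLp.sub_apply, PiLp.sub_apply, R_apply]
        split_ifs with hk
        · subst hk
          rw [habs_uv]
          rw [abs_le]
          constructor <;> linarith
        · exact le_rfl
      calc |P (R iN u) - P v| ≤ C * ‖R iN u - v‖ ^ α :=
            hC i j _ (R_mem_halfSp hu.le) v hv
        _ ≤ C * ‖u - v‖ ^ α := hmono _ _ (norm_nonneg _) hle
        _ ≤ 2 * C * ‖u - v‖ ^ α := by nlinarith [hrnn u v]
    · have hone : (i = iN ∧ j ≠ iN) ∨ (i ≠ iN ∧ j = iN) := by tauto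
      have hs : ((if i = iN then (-1:ℝ) else 1) * (if j = iN then (-1:ℝ) else 1)) = -1 := by
        rcases hone with ⟨hi, hj⟩ | ⟨hi, hj⟩ <;> simp [hi, hj]
      rw [hs]
      set u0 : EuclideanSpace ℝ (Fin n) := u - (u iN) • EuclideanSpace.single iN 1 with hu0
      set v0 : EuclideanSpace ℝ (Fin n) := v - (v iN) • EuclideanSpace.single iN 1 with hv0
      have hu0N : u0 iN = 0 := by
        rw [hu0, PiLp.sub_apply, PiLp.smul_apply, EuclideanSpace.single_apply, if_pos rfl,
          smul_eq_mul]; ring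
      have hv0N : v0 iN = 0 := by
        rw [hv0, PiLp.sub_apply, PiLp.smul_apply, EuclideanSpace.single_apply, if_pos rfl,
          smul_eq_mul]; ring
      have hP0u : P u0 = 0 := P_bd_zero hf hneu i j hone hu0N
      have hP0v : P v0 = 0 := P_bd_zero hf hneu i j hone hv0N
      have hRu : R iN u - u0 = (-(2 * u iN) + u iN) • EuclideanSpace.single iN 1 := by
        rw [R_eq, hu0]
        module
      have hnu : ‖R iN u - u0‖ = |u iN| := by
        rw [hRu, norm_smul, EuclideanSpace.norm_single, norm_one, mul_one, Real.norm_eq_abs]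
        have h9 : -(2 * u iN) + u iN = -(u iN) := by ring
        rw [h9, abs_neg]
      have hnv : ‖v - v0‖ = |v iN| := by
        rw [hv0]
        have : v - (v - (v iN) • EuclideanSpace.single iN 1) = (v iN) • EuclideanSpace.single iN 1 := by
          module
        rw [this, norm_smul, EuclideanSpace.norm_single, norm_one, mul_one, Real.norm_eq_abs]
      have hub : |u iN| ≤ ‖u - v‖ := by
        refine le_trans ?_ (coord u v)
        rw [habs_uv, abs_of_neg hu]
        linarith
      have hvb : |v iN| ≤ ‖u - v‖ := by
        refine le_trans ?_ (coord u v)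
        rw [habs_uv, abs_of_nonneg hv]
        linarith
      have hh : (-1) * P (R iN u) - P v = (P u0 - P (R iN u)) + (P v0 - P v) := by
        rw [hP0u, hP0v]; ring
      rw [hh]
      calc |(P u0 - P (R iN u)) + (P v0 - P v)|
          ≤ |P u0 - P (R iN u)| + |P v0 - P v| := abs_add_le _ _
        _ ≤ C * ‖u0 - R iN u‖ ^ α + C * ‖v0 - v‖ ^ α := by
            apply add_le_add
            · exact hC i j u0 hu0N.ge (R iN u) (R_mem_halfSp hu.le)
            · exact hC i j v0 hv0N.ge v hv
        _ ≤ C * ‖u - v‖ ^ α + C * ‖u - v‖ ^ α := by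
            apply add_le_add
            · apply hmono _ _ (norm_nonneg _)
              rw [norm_sub_rev, hnu]; exact hub
            · apply hmono _ _ (norm_nonneg _)
              rw [norm_sub_rev, hnv]; exact hvb
        _ = 2 * C * ‖u - v‖ ^ α := by ring
  -- main case split
  rcases le_or_gt 0 (y iN) with hy | hy <;> rcases le_or_gt 0 (z iN) with hz | hz
  · rw [Q_pos hf hneu i j hy, Q_pos hf hneu i j hz, ← hP]
    calc |P y - P z| ≤ C * ‖y - z‖ ^ α := hC i j y hy z hz
      _ ≤ 2 * C * ‖y - z‖ ^ α := by nlinarith [hrnn y z]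
  · rw [abs_sub_comm, norm_sub_rev]
    exact key z y hz hy
  · exact key y z hy hz
  · rw [Q_neg hf hneu i j hy, Q_neg hf hneu i j hz, ← hP]
    set s := ((if i = iN then (-1:ℝ) else 1) * (if j = iN then (-1:ℝ) else 1)) with hsdef
    have habs : |s| = 1 := by
      rw [hsdef]; by_cases hi : i = iN <;> by_cases hj : j = iN <;> simp [hi, hj]
    rw [← mul_sub, abs_mul, habs, one_mul]
    have hRR : R iN y - R iN z = R iN (y - z) := (map_sub (R iN) y z).symm
    calc |P (R iN y) - P (R iN z)| ≤ C * ‖R iN y - R iN z‖ ^ α :=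
          hC i j _ (R_mem_halfSp hy.le) _ (R_mem_halfSp hz.le)
      _ = C * ‖y - z‖ ^ α := by rw [hRR, R_norm]
      _ ≤ 2 * C * ‖y - z‖ ^ α := by nlinarith [hrnn y z]

end Main5


theorem evenRefl_eq (iN : Fin n) (f : EuclideanSpace ℝ (Fin n) → ℝ) :
    evenRefl iN f = evenRefl' iN f := rfl

theorem master (iN : Fin n) (f : EuclideanSpace ℝ (Fin n) → ℝ)
    (hf : ContDiffOn ℝ 2 f (halfSp iN))
    (hneu : ∀ x : EuclideanSpace ℝ (Fin n), x iN = 0 →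
      fderivWithin ℝ f (halfSp iN) x (EuclideanSpace.single iN 1) = 0) :
    ContDiff ℝ 2 (evenRefl iN f) ∧
    ∀ α : ℝ, 0 < α → α < 1 →
      (∃ C : ℝ, ∀ i j : Fin n, ∀ x ∈ halfSp iN, ∀ y ∈ halfSp iN,
        |secondPartialW f (halfSp iN) i j x - secondPartialW f (halfSp iN) i j y|
          ≤ C * ‖x - y‖ ^ α) →
      ∀ i j : Fin n, ∀ x : EuclideanSpace ℝ (Fin n), ∃ ε > (0 : ℝ), ∃ C : ℝ,
        ∀ y ∈ Metric.ball x ε, ∀ z ∈ Metric.ball x ε,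
          |secondPartial (evenRefl iN f) i j y - secondPartial (evenRefl iN f) i j z|
            ≤ C * ‖y - z‖ ^ α := by
  constructor
  · rw [evenRefl_eq]
    exact contDiff_evenRefl' hf hneu
  · rintro α hα _ ⟨C, hC⟩ i j x
    refine ⟨1, one_pos, 2 * C, fun y _ z _ => ?_⟩
    rw [evenRefl_eq]
    exact holder_glob hf hneu α hα C hC i j y z

end ERAux

/-- Even reflection of a `C²` function with vanishing normal derivative: if `f` is `C²` up to
the boundary on the closed half-space `H = {xₙ ≥ 0}` and `∂f/∂xₙ = 0` on `{xₙ = 0}`, then the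
even reflection `f̃` of `f` is `C²` on all of `ℝⁿ`; moreover, if in addition the second-order
partial derivatives of `f` are `α`-Hölder on `H` (`0 < α < 1`), then the second-order partial
derivatives of `f̃` are locally `α`-Hölder on `ℝⁿ`. -/
theorem even_reflection_C2 (n : ℕ) (hn : 1 ≤ n) (f : EuclideanSpace ℝ (Fin n) → ℝ)
    (hf : ContDiffOn ℝ 2 f (halfSp (⟨n - 1, by omega⟩ : Fin n)))
    (hneu : ∀ x : EuclideanSpace ℝ (Fin n), x (⟨n - 1, by omega⟩ : Fin n) = 0 →
      fderivWithin ℝ f (halfSp (⟨n - 1, by omega⟩ : Fin n)) x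
        (EuclideanSpace.single (⟨n - 1, by omega⟩ : Fin n) 1) = 0) :
    ContDiff ℝ 2 (evenRefl (⟨n - 1, by omega⟩ : Fin n) f) ∧
    ∀ α : ℝ, 0 < α → α < 1 →
      (∃ C : ℝ, ∀ i j : Fin n, ∀ x ∈ halfSp (⟨n - 1, by omega⟩ : Fin n),
        ∀ y ∈ halfSp (⟨n - 1, by omega⟩ : Fin n),
          |secondPartialW f (halfSp (⟨n - 1, by omega⟩ : Fin n)) i j x -
            secondPartialW f (halfSp (⟨n - 1, by omega⟩ : Fin n)) i j y| ≤ C * ‖x - y‖ ^ α) →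
      ∀ i j : Fin n, ∀ x : EuclideanSpace ℝ (Fin n), ∃ ε > (0 : ℝ), ∃ C : ℝ,
        ∀ y ∈ Metric.ball x ε, ∀ z ∈ Metric.ball x ε,
          |secondPartial (evenRefl (⟨n - 1, by omega⟩ : Fin n) f) i j y -
            secondPartial (evenRefl (⟨n - 1, by omega⟩ : Fin n) f) i j z|
          ≤ C * ‖y - z‖ ^ α := by
  exact ERAux.master _ f hf hneu
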